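/- For a normal cone γ in the power set category P_o(X_n) with vertex A, the map α : X_n → X_n defined by α(x) = γ({x})(x) is an order-preserving transformation with image A. -/
import Mathlib


/-- For a normal cone `γ` with vertex `A` in the power set category `P_o(X_n)`,
the map `α : x ↦ γ({x})(x)` is an order-preserving transformation of `Fin n`
with image exactly `A`. -/
theorem stmt15 (n : ℕ) (hn : 3 ≤ n) (A : Set (Fin n))
    (hA : A.Nonempty) (hA2 : A ≠ Set.univ)
    (γ : ∀ B : Set (Fin n), B.Nonempty ∧ B ≠ Set.univ → (B → A))
    (hmono : ∀ B hB, Monotone (γ B hB))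
    (hcompat : ∀ (B B' : Set (Fin n)) (hB : B.Nonempty ∧ B ≠ Set.univ) (hB' : B'.Nonempty ∧ B' ≠ Set.univ) (h : B ⊆ B'), ∀ x : B, γ B' hB' (Set.inclusion h x) = γ B hB x)
    (hnormal : ∃ C hC, Function.Bijective (γ C hC))
    (α : Fin n → Fin n)
    (hα : ∀ (x : Fin n) (hx : ({x} : Set (Fin n)).Nonempty ∧ ({x} : Set (Fin n)) ≠ Set.univ),
      α x = ((γ {x} hx ⟨x, rfl⟩ : A) : Fin n)) :
    Monotone α ∧ Set.range α = A := by
  have hne : ∀ s : Set (Fin n), s.ncard ≤ 2 → s ≠ Set.univ := by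
    intro s hs h
    rw [h, Set.ncard_univ] at hs
    simp [Nat.card_eq_fintype_card] at hs
    omega
  have hxs : ∀ x : Fin n, ({x} : Set (Fin n)).Nonempty ∧ ({x} : Set (Fin n)) ≠ Set.univ :=
    fun x => ⟨⟨x, rfl⟩, hne _ (by simp)⟩
  have hpair : ∀ x y : Fin n, ({x, y} : Set (Fin n)).Nonempty ∧ ({x, y} : Set (Fin n)) ≠ Set.univ :=
    fun x y => ⟨⟨x, by simp⟩, hne _ (le_trans (Set.ncard_insert_le _ _) (by simp))⟩
  constructor
  · intro x y hxy
    rw [hα x (hxs x), hα y (hxs y)]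
    have sub1 : ({x} : Set (Fin n)) ⊆ {x, y} := by intro z hz; simp_all
    have sub2 : ({y} : Set (Fin n)) ⊆ {x, y} := by intro z hz; simp_all
    have h1 := hcompat {x} {x, y} (hxs x) (hpair x y) sub1 ⟨x, rfl⟩
    have h2 := hcompat {y} {x, y} (hxs y) (hpair x y) sub2 ⟨y, rfl⟩
    rw [← h1, ← h2]
    exact hmono {x, y} (hpair x y) (show (Set.inclusion sub1 ⟨x, rfl⟩ : ({x, y} : Set (Fin n))) ≤
      Set.inclusion sub2 ⟨y, rfl⟩ from hxy)
  · apply le_antisymm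
    · rintro _ ⟨x, rfl⟩
      rw [hα x (hxs x)]
      exact (γ {x} (hxs x) ⟨x, rfl⟩).2
    · intro a ha
      obtain ⟨C, hC, hbij⟩ := hnormal
      obtain ⟨c, hc⟩ := hbij.2 ⟨a, ha⟩
      have sub : ({(c : Fin n)} : Set (Fin n)) ⊆ C := Set.singleton_subset_iff.mpr c.2
      have h := hcompat {(c : Fin n)} C (hxs c) hC sub ⟨c, rfl⟩
      have hinc : Set.inclusion sub (⟨c, rfl⟩ : ({(c : Fin n)} : Set (Fin n))) = c :=
        Subtype.ext rfl
      refine ⟨c, ?_⟩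
      rw [hα c (hxs c), ← h, hinc, hc]
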